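/- Let X_s be a measurable subset of the d-dimensional Euclidean ball B(r) of radius r centered at the origin, and let e be a unit vector. Suppose that for every u ∈ X_s and every μ ∈ [δ/(2√d), 1], the points u + μr·e and u - μr·e are not in X_s. Then Vol(X_s) ≤ 2·(δ/(2√d))·r·Vol(B^{(d-1)}(r)), where B^{(d-1)}(r) is the (d-1)-dimensional ball of radius r. -/

import Mathlib

open MeasureTheory

/-- Volume of the Euclidean ball of radius `r` in `ℝ^d`:
`π^{d/2} r^d / Γ(d/2 + 1)`. -/
noncomputable def euclideanBallVol (d : ℕ) (r : ℝ) : ℝ :=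
  Real.pi ^ ((d : ℝ) / 2) * r ^ d / Real.Gamma ((d : ℝ) / 2 + 1)

/-- One-dimensional key lemma: a subset of `[-r, r]` such that `t + c` escapes
the set for every `t` in the set and every `c ∈ [c0, r]` has measure at most `2 c0`. -/
lemma line_escape_bound {A : Set ℝ} {r c0 : ℝ} (hr : 0 < r) (hc0 : 0 < c0)
    (hA : A ⊆ Set.Icc (-r) r)
    (hgap : ∀ t ∈ A, ∀ c ∈ Set.Icc c0 r, t + c ∉ A) :
    volume A ≤ ENNReal.ofReal (2 * c0) := by
  rcases A.eq_empty_or_nonempty with hA0 | hne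
  · simp [hA0]
  have hbdd : BddBelow A := ⟨-r, fun x hx => (hA hx).1⟩
  set a := sInf A with ha_def
  have har : -r ≤ a := le_csInf hne fun x hx => (hA hx).1
  have claim1 : ∀ t ∈ A, t ≤ a + c0 ∨ a + r < t := by
    intro t ht
    by_contra hcon
    push_neg at hcon
    obtain ⟨h1, h2⟩ := hcon
    have hlt : sInf A < t - c0 := by simp only [← ha_def]; linarith
    obtain ⟨a', ha'A, ha'lt⟩ := exists_lt_of_csInf_lt hne hlt
    have haa' : a ≤ a' := csInf_le hbdd ha'A
    have := hgap a' ha'A (t - a') ⟨by linarith, by linarith⟩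
    exact this (by simpa using ht)
  set A2 := A ∩ Set.Ioi (a + r) with hA2_def
  rcases A2.eq_empty_or_nonempty with hA20 | hne2
  · have hsub : A ⊆ Set.Icc a (a + c0) := by
      intro t ht
      rcases claim1 t ht with h | h
      · exact ⟨csInf_le hbdd ht, h⟩
      · exfalso
        have : t ∈ A2 := ⟨ht, h⟩
        rw [hA20] at this
        exact this
    calc volume A ≤ volume (Set.Icc a (a + c0)) := measure_mono hsub
      _ = ENNReal.ofReal c0 := by rw [Real.volume_Icc]; ring_nf
      _ ≤ ENNReal.ofReal (2 * c0) := ENNReal.ofReal_le_ofReal (by linarith)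
  · have hbdd2 : BddBelow A2 := hbdd.mono Set.inter_subset_left
    set b := sInf A2 with hb_def
    have hbr : a + r ≤ b := le_csInf hne2 fun x hx => le_of_lt hx.2
    have claim2 : ∀ t ∈ A2, t ≤ b + c0 := by
      intro t ht
      by_contra hcon
      push_neg at hcon
      have hlt : sInf A2 < t - c0 := by simp only [← hb_def]; linarith
      obtain ⟨a', ha'A2, ha'lt⟩ := exists_lt_of_csInf_lt hne2 hlt
      have hba' : b ≤ a' := csInf_le hbdd2 ha'A2
      have htr : t ≤ r := (hA ht.1).2
      have := hgap a' ha'A2.1 (t - a') ⟨by linarith, by linarith⟩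
      exact this (by simpa using ht.1)
    have hsub : A ⊆ Set.Icc a (a + c0) ∪ Set.Icc b (b + c0) := by
      intro t ht
      rcases claim1 t ht with h | h
      · exact Or.inl ⟨csInf_le hbdd ht, h⟩
      · have ht2 : t ∈ A2 := ⟨ht, h⟩
        exact Or.inr ⟨csInf_le hbdd2 ht2, claim2 t ht2⟩
    calc volume A ≤ volume (Set.Icc a (a + c0) ∪ Set.Icc b (b + c0)) := measure_mono hsub
      _ ≤ volume (Set.Icc a (a + c0)) + volume (Set.Icc b (b + c0)) := measure_union_le _ _
      _ = ENNReal.ofReal c0 + ENNReal.ofReal c0 := by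
          rw [Real.volume_Icc, Real.volume_Icc]; ring_nf
      _ = ENNReal.ofReal (2 * c0) := by
          rw [← ENNReal.ofReal_add hc0.le hc0.le]; ring_nf

/-- If every point of `X_s` escapes from `X_s` when shifted by `±μr e`
for all `μ ∈ [δ/(2√d), 1]`, then the volume of `X_s` is at most
`2(δ/(2√d)) r · Vol(B^{(d-1)}(r))`. -/
theorem bad_set_volume_bound {d : ℕ} (hd : 1 ≤ d) (r δ : ℝ) (hr : 0 < r)
    (hδ : δ ∈ Set.Ioo (0 : ℝ) 1)
    (e : EuclideanSpace ℝ (Fin d)) (he : ‖e‖ = 1)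
    (Xs : Set (EuclideanSpace ℝ (Fin d))) (hXmeas : MeasurableSet Xs)
    (hXsub : Xs ⊆ Metric.closedBall 0 r)
    (hescape : ∀ u ∈ Xs, ∀ μ ∈ Set.Icc (δ / (2 * Real.sqrt d)) 1,
      u + (μ * r) • e ∉ Xs ∧ u - (μ * r) • e ∉ Xs) :
    (volume Xs).toReal ≤ 2 * (δ / (2 * Real.sqrt d)) * r * euclideanBallVol (d - 1) r := by
  classical
  obtain ⟨m, rfl⟩ : ∃ m, d = m + 1 := ⟨d - 1, (Nat.succ_pred_eq_of_pos hd).symm⟩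
  set s : ℝ := δ / (2 * Real.sqrt (m + 1 : ℕ)) with hs_def
  have hsqrt1 : (1 : ℝ) ≤ Real.sqrt (m + 1 : ℕ) := by
    rw [show (1:ℝ) = Real.sqrt 1 from (Real.sqrt_one).symm]
    exact Real.sqrt_le_sqrt (by exact_mod_cast Nat.one_le_iff_ne_zero.mpr (by omega))
  have hs_pos : 0 < s := by
    apply div_pos hδ.1; linarith
  have hs_lt1 : s < 1 := by
    rw [hs_def, div_lt_one (by linarith)]
    calc δ < 1 := hδ.2
      _ ≤ 2 * Real.sqrt (m + 1 : ℕ) := by linarith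
  -- orthonormal basis with first vector `e`
  have hcard : Module.finrank ℝ (EuclideanSpace ℝ (Fin (m + 1)))
      = Fintype.card (Fin (m + 1)) := by
    simp [finrank_euclideanSpace]
  have horth : Orthonormal ℝ (({0} : Set (Fin (m + 1))).restrict (fun _ => e)) := by
    rw [orthonormal_iff_ite]
    intro i j
    have hij : i = j := Subtype.ext (by
      rw [Set.mem_singleton_iff.mp i.2, Set.mem_singleton_iff.mp j.2])
    rw [hij, if_pos rfl]
    have h1 : (inner ℝ e e : ℝ) = 1 := by
      rw [real_inner_self_eq_norm_sq, he]; norm_num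
    exact h1
  obtain ⟨b, hb⟩ := horth.exists_orthonormalBasis_extension_of_card_eq hcard
  have hb0 : b 0 = e := hb 0 rfl
  set φ := b.repr with hφ_def
  -- the full measurable equivalence to ℝ × (Fin m → ℝ)
  let M : EuclideanSpace ℝ (Fin (m + 1)) ≃ᵐ EuclideanSpace ℝ (Fin (m + 1)) :=
    φ.toHomeomorph.toMeasurableEquiv
  let ψ := (MeasurableEquiv.toLp 2 (Fin (m + 1) → ℝ)).symm
  let χ := MeasurableEquiv.piFinSuccAbove (fun _ : Fin (m + 1) => ℝ) 0
  let Φ := (M.trans ψ).trans χ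
  have hΦmp : MeasurePreserving Φ volume volume :=
    ((volume_preserving_piFinSuccAbove (fun _ : Fin (m + 1) => ℝ) 0).comp
      ((EuclideanSpace.volume_preserving_symm_measurableEquiv_toLp (Fin (m + 1))).comp
        b.measurePreserving_repr))
  have hΦeval : ∀ u, Φ u = ((φ u) 0, fun j : Fin m => (φ u) (Fin.succAbove 0 j)) :=
    fun u => rfl
  -- shifting along `e` shifts the first coordinate
  have hshift : ∀ (u : EuclideanSpace ℝ (Fin (m + 1))) (c : ℝ),
      Φ (u + c • e) = ((Φ u).1 + c, (Φ u).2) := by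
    intro u c
    have h1 : φ (u + c • e) = φ u + c • EuclideanSpace.single 0 1 := by
      rw [map_add, LinearIsometryEquiv.map_smul, ← hb0, OrthonormalBasis.repr_self]
    rw [hΦeval, hΦeval, h1]
    refine Prod.ext ?_ ?_
    · simp [EuclideanSpace.single_apply]
    · funext j
      simp [EuclideanSpace.single_apply, Fin.succAbove_of_castSucc_lt,
        (Fin.succ_ne_zero j), Fin.succAbove]
  set Y := Φ '' Xs with hY_def
  have hYm : MeasurableSet Y := Φ.measurableEmbedding.measurableSet_image.2 hXmeas
  have hYvol : volume Y = volume Xs := by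
    rw [hY_def, MeasurableEquiv.image_eq_preimage_symm]
    exact (hΦmp.symm Φ).measure_preimage hXmeas.nullMeasurableSet
  -- geometric control on Y
  have hYsub : ∀ p ∈ Y, (p.1 ∈ Set.Icc (-r) r ∧ (∑ j, (p.2 j) ^ 2) ≤ r ^ 2) := by
    rintro p ⟨u, hu, rfl⟩
    have hnorm : ‖φ u‖ ≤ r := by
      rw [φ.norm_map]
      simpa [mem_closedBall_zero_iff] using hXsub hu
    have hsq : ‖φ u‖ ^ 2 = ∑ i, (φ u i) ^ 2 := by
      rw [EuclideanSpace.norm_eq]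
      rw [Real.sq_sqrt (by positivity)]
      simp [sq_abs]
    have hsplit : ∑ i, (φ u i) ^ 2
        = (φ u 0) ^ 2 + ∑ j : Fin m, (φ u (Fin.succAbove 0 j)) ^ 2 := by
      rw [Fin.sum_univ_succ]
      simp [Fin.succAbove_zero]
    have hbound : (φ u 0) ^ 2 + ∑ j : Fin m, (φ u (Fin.succAbove 0 j)) ^ 2 ≤ r ^ 2 := by
      rw [← hsplit, ← hsq]
      nlinarith [norm_nonneg (φ u)]
    have hnonneg : (0:ℝ) ≤ ∑ j : Fin m, (φ u (Fin.succAbove 0 j)) ^ 2 :=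
      Finset.sum_nonneg fun j _ => sq_nonneg _
    rw [hΦeval]
    constructor
    · constructor
      · nlinarith [sq_nonneg (φ u 0 + r)]
      · nlinarith [sq_nonneg (φ u 0 - r)]
    · nlinarith [sq_nonneg (φ u 0)]
  -- escape property on slices
  have hslice : ∀ (y : Fin m → ℝ) (t : ℝ), (t, y) ∈ Y →
      ∀ c ∈ Set.Icc (s * r) r, (t + c, y) ∉ Y := by
    rintro y t ⟨u, hu, hΦu⟩ c hc ⟨v, hv, hΦv⟩
    have hveq : v = u + c • e := by
      apply Φ.injective
      rw [hΦv, hshift u c, hΦu]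
    have hμ : c / r ∈ Set.Icc (δ / (2 * Real.sqrt ((m:ℝ) + 1))) 1 := by
      constructor
      · rw [le_div_iff₀ hr]
        have := hc.1
        rw [hs_def] at this
        convert this using 3
        push_cast; ring
      · rw [div_le_one hr]; exact hc.2
    have := (hescape u hu (c / r) (by exact_mod_cast hμ)).1
    rw [div_mul_cancel₀ c hr.ne'] at this
    exact this (hveq ▸ hv)
  -- slice bound via the 1-D lemma
  set S : Set (Fin m → ℝ) := {y | (∑ j, (y j) ^ 2) ≤ r ^ 2} with hS_def
  have hSm : MeasurableSet S := by
    apply measurableSet_le _ measurable_const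
    exact Finset.measurable_sum _ fun j _ => (measurable_pi_apply j).pow measurable_const
  have hslice_bound : ∀ y : Fin m → ℝ,
      volume ((fun t => (t, y)) ⁻¹' Y)
        ≤ S.indicator (fun _ => ENNReal.ofReal (2 * (s * r))) y := by
    intro y
    rcases ((fun t => (t, y)) ⁻¹' Y).eq_empty_or_nonempty with h0 | ⟨t0, ht0⟩
    · simp [h0]
    have hyS : y ∈ S := (hYsub _ ht0).2
    rw [Set.indicator_of_mem hyS]
    apply line_escape_bound hr (by positivity)
    · intro t ht
      exact (hYsub _ ht).1
    · intro t ht c hc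
      exact hslice y t ht c hc
  -- assemble with Fubini
  have hprod : volume Y = ∫⁻ y, volume ((fun t => (t, y)) ⁻¹' Y) := by
    rw [MeasureTheory.Measure.volume_eq_prod]
    exact Measure.prod_apply_symm hYm
  have hS_ball : S = (MeasurableEquiv.toLp 2 (Fin m → ℝ)) ⁻¹' Metric.closedBall 0 r := by
    ext y
    simp only [hS_def, Set.mem_setOf_eq, Set.mem_preimage, mem_closedBall_zero_iff]
    rw [EuclideanSpace.norm_eq, Real.sqrt_le_iff]
    simp only [MeasurableEquiv.coe_toLp, PiLp.toLp_apply,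
      Real.norm_eq_abs, sq_abs]
    exact ⟨fun h => ⟨hr.le, h⟩, fun h => h.2⟩
  have hvolS : volume S = volume (Metric.closedBall (0 : EuclideanSpace ℝ (Fin m)) r) := by
    rw [hS_ball]
    exact ((EuclideanSpace.volume_preserving_symm_measurableEquiv_toLp (Fin m)).symm).measure_preimage
      measurableSet_closedBall.nullMeasurableSet
  have hball_fin : volume (Metric.closedBall (0 : EuclideanSpace ℝ (Fin m)) r) ≠ ⊤ :=
    (isCompact_closedBall 0 r).measure_lt_top.ne
  have hchain : volume Y ≤ ENNReal.ofReal (2 * (s * r))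
      * volume (Metric.closedBall (0 : EuclideanSpace ℝ (Fin m)) r) := by
    rw [hprod, ← hvolS]
    calc ∫⁻ y, volume ((fun t => (t, y)) ⁻¹' Y)
        ≤ ∫⁻ y, S.indicator (fun _ => ENNReal.ofReal (2 * (s * r))) y :=
          lintegral_mono hslice_bound
      _ = ENNReal.ofReal (2 * (s * r)) * volume S := lintegral_indicator_const hSm _
  have hΓpos : 0 < Real.Gamma ((m : ℝ) / 2 + 1) := Real.Gamma_pos_of_pos (by positivity)
  have hball_toReal : (volume (Metric.closedBall (0 : EuclideanSpace ℝ (Fin m)) r)).toReal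
      = euclideanBallVol m r := by
    rcases Nat.eq_zero_or_pos m with hm | hm
    · subst hm
      have huniv : Metric.closedBall (0 : EuclideanSpace ℝ (Fin 0)) r = Set.univ := by
        ext x
        have hx : x = 0 := Subsingleton.elim x 0
        simp [mem_closedBall_zero_iff, hx, hr.le]
      rw [huniv, volume_euclideanSpace_eq_dirac]
      simp [euclideanBallVol, Real.Gamma_one]
    haveI : Nonempty (Fin m) := ⟨⟨0, hm⟩⟩
    rw [EuclideanSpace.volume_closedBall]
    rw [Fintype.card_fin]
    rw [ENNReal.toReal_mul, ENNReal.toReal_pow, ENNReal.toReal_ofReal hr.le,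
      ENNReal.toReal_ofReal (by positivity)]
    have hsqrtpow : Real.sqrt Real.pi ^ m = Real.pi ^ ((m : ℝ) / 2) := by
      rw [← Real.rpow_natCast (Real.sqrt Real.pi) m, Real.sqrt_eq_rpow,
        ← Real.rpow_mul Real.pi_pos.le]
      congr 1
      ring
    rw [hsqrtpow, euclideanBallVol]
    ring
  have hfinal : (volume Xs).toReal ≤ 2 * (s * r) * euclideanBallVol m r := by
    rw [← hYvol]
    calc (volume Y).toReal
        ≤ (ENNReal.ofReal (2 * (s * r))
            * volume (Metric.closedBall (0 : EuclideanSpace ℝ (Fin m)) r)).toReal :=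
          ENNReal.toReal_mono (ENNReal.mul_ne_top ENNReal.ofReal_ne_top hball_fin) hchain
      _ = 2 * (s * r) * euclideanBallVol m r := by
          rw [ENNReal.toReal_mul, ENNReal.toReal_ofReal (by positivity), hball_toReal]
  have hidx : m + 1 - 1 = m := by omega
  rw [hidx]
  calc (volume Xs).toReal ≤ 2 * (s * r) * euclideanBallVol m r := hfinal
    _ = 2 * s * r * euclideanBallVol m r := by ring
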